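/- Let ψ : ℝⁿ → ℝ be convex with directional derivatives ψ′(0;d), let B be symmetric positive definite, and let d* be the unique minimizer of d ↦ ψ(d) + ½ dᵀBd. Then d* = 0 if and only if ψ′(0; d) ≥ 0 for all d ∈ ℝⁿ (i.e., 0 is a stationary point of ψ). -/

import Mathlib

open Matrix

/-- with `ψ` convex admitting directional derivatives `D d = ψ′(0;d)`,
`B ≻ 0`, and `d*` a minimizer of `ψ(d) + ½dᵀBd`, we have `d* = 0` iff `0` is a
stationary point of `ψ`, i.e. all directional derivatives at `0` are nonnegative. -/
theorem min_zero_iff_stationary {n : ℕ}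
    (ψ : (Fin n → ℝ) → ℝ) (hψ : ConvexOn ℝ Set.univ ψ)
    (D : (Fin n → ℝ) → ℝ)
    (hD : ∀ d : Fin n → ℝ, Filter.Tendsto (fun t : ℝ => (ψ (t • d) - ψ 0) / t)
      (nhdsWithin 0 (Set.Ioi 0)) (nhds (D d)))
    (B : Matrix (Fin n) (Fin n) ℝ) (hB : B.PosDef)
    (dstar : Fin n → ℝ)
    (hmin : IsMinOn (fun d : Fin n → ℝ => ψ d + (1 / 2) * (d ⬝ᵥ B.mulVec d)) Set.univ dstar) :
    dstar = 0 ↔ ∀ d : Fin n → ℝ, 0 ≤ D d := by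
  constructor
  · -- dstar = 0 → all directional derivatives nonneg
    rintro rfl d
    have h0 : ∀ t : ℝ, 0 < t →
        -(1 / 2) * t * (d ⬝ᵥ B.mulVec d) ≤ (ψ (t • d) - ψ 0) / t := by
      intro t ht
      have := hmin (Set.mem_univ (t • d))
      simp only [Set.mem_setOf_eq] at this
      have hBq : (t • d) ⬝ᵥ B.mulVec (t • d) = t ^ 2 * (d ⬝ᵥ B.mulVec d) := by
        rw [Matrix.mulVec_smul, dotProduct_smul, smul_dotProduct]
        ring_nf
      rw [le_div_iff₀ ht]
      simp only [zero_dotProduct, mul_zero, add_zero] at this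
      nlinarith [this, hBq]
    have hlim : Filter.Tendsto (fun t : ℝ => -(1 / 2) * t * (d ⬝ᵥ B.mulVec d))
        (nhdsWithin 0 (Set.Ioi 0)) (nhds 0) := by
      have : Filter.Tendsto (fun t : ℝ => -(1 / 2) * t * (d ⬝ᵥ B.mulVec d))
          (nhds 0) (nhds (-(1 / 2) * 0 * (d ⬝ᵥ B.mulVec d))) := by
        exact ((continuous_const.mul continuous_id).mul continuous_const).tendsto 0
      simpa using this.mono_left nhdsWithin_le_nhds
    refine le_of_tendsto_of_tendsto hlim (hD d) ?_
    filter_upwards [self_mem_nhdsWithin] with t ht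
    exact h0 t ht
  · -- stationarity → dstar = 0
    intro hstat
    -- first: ψ 0 ≤ ψ d for all d
    have hglobal : ∀ d : Fin n → ℝ, ψ 0 ≤ ψ d := by
      intro d
      have key : D d ≤ ψ d - ψ 0 := by
        refine le_of_tendsto (hD d) ?_
        filter_upwards [self_mem_nhdsWithin,
          Ioo_mem_nhdsGT_of_mem (Set.mem_Ico.mpr ⟨le_refl (0:ℝ), one_pos⟩)] with t ht ht1
        have ht' : (0:ℝ) < t := ht
        have ht1' : t < 1 := ht1.2
        have hc := hψ.2 (Set.mem_univ d) (Set.mem_univ 0) (le_of_lt ht')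
          (by linarith : (0:ℝ) ≤ 1 - t) (by ring)
        simp only [smul_zero, add_zero, smul_eq_mul] at hc
        rw [div_le_iff₀ ht']
        nlinarith [hc]
      linarith [hstat d]
    by_contra hne
    have hpos : 0 < dstar ⬝ᵥ B.mulVec dstar := by
      have := hB.dotProduct_mulVec_pos hne
      simpa using this
    have := hmin (Set.mem_univ (0 : Fin n → ℝ))
    simp only [Set.mem_setOf_eq] at this
    have h0q : (0 : Fin n → ℝ) ⬝ᵥ B.mulVec 0 = 0 := by simp
    have hg := hglobal dstar
    rw [isMinOn_iff] at hmin
    have := hmin 0 (Set.mem_univ _)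
    simp only [h0q] at this
    nlinarith
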